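/- Let k ≥ 1, W a graphon, and C a μ^{⊗k}-relatively complete sub-σ-algebra of 𝓑^{⊗k} such that L²(X^k, C, μ^{⊗k}) is invariant under every operator of the family 𝕋^k_W. Then for every term 𝔽 over 𝓕^k, t(𝔽, (E_C ∘ T_F ∘ E_C)_{F ∈ 𝓕^k}) = t(𝔽, 𝕋^k_W), where T_F denotes the operator of 𝕋^k_W indexed by the symbol F. -/

import Mathlib

open MeasureTheory

noncomputable section

/-- The index set `𝓕^k = {N_j : j ∈ [k]} ∪ {A_{ij} : i ≠ j ∈ [k]}` of neighbor and
adjacency symbols. -/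
inductive FSym (k : ℕ) : Type where
  | N (j : Fin k) : FSym k
  | A (i j : Fin k) (h : i ≠ j) : FSym k

/-- Terms over `𝓕^k`: generated from `𝟙` by composition with symbols of `𝓕^k` and
binary (Schur) products. -/
inductive FTerm (k : ℕ) : Type where
  | one : FTerm k
  | comp (F : FSym k) (t : FTerm k) : FTerm k
  | mul (t₁ t₂ : FTerm k) : FTerm k

/-- The constant-one function as an element of `L²` of a finite measure. -/
noncomputable def lpOne {Z : Type*} [MeasurableSpace Z] (ν : Measure Z)
    [IsFiniteMeasure ν] : Lp ℝ 2 ν :=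
  Lp.const 2 ν (1 : ℝ)

open Classical in
/-- Pointwise product of two `L²` elements, as an element of `L²` (defined to be `0` in the
degenerate case where the product fails to be square-integrable; for the bounded functions
arising as homomorphism functions the product is always square-integrable). -/
noncomputable def lpMul {Z : Type*} [MeasurableSpace Z] {ν : Measure Z}
    (g₁ g₂ : Lp ℝ 2 ν) : Lp ℝ 2 ν :=
  if h : MemLp (⇑g₁ * ⇑g₂) 2 ν then h.toLp _ else 0

/-- The homomorphism function `f^{𝔽,𝕋}` of a term `𝔽` in a family `𝕋 = (T_F)_{F ∈ 𝓕^k}`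
of operators on `L²(Z, ν)`: `f^{𝟙,𝕋} = 1`, `f^{F∘𝔽,𝕋} = T_F f^{𝔽,𝕋}` and
`f^{𝔽₁·𝔽₂,𝕋} = f^{𝔽₁,𝕋} ⬝ f^{𝔽₂,𝕋}` (pointwise product). -/
noncomputable def homFun {Z : Type*} [MeasurableSpace Z] (ν : Measure Z)
    [IsFiniteMeasure ν] {k : ℕ} (T : FSym k → (Lp ℝ 2 ν →L[ℝ] Lp ℝ 2 ν)) :
    FTerm k → Lp ℝ 2 ν
  | FTerm.one => lpOne ν
  | FTerm.comp F t => T F (homFun ν T t)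
  | FTerm.mul t₁ t₂ => lpMul (homFun ν T t₁) (homFun ν T t₂)

/-- The homomorphism density `t(𝔽, 𝕋) = ⟨1, f^{𝔽,𝕋}⟩` of a term in a family of
operators. -/
noncomputable def homDen {Z : Type*} [MeasurableSpace Z] (ν : Measure Z)
    [IsFiniteMeasure ν] {k : ℕ} (T : FSym k → (Lp ℝ 2 ν →L[ℝ] Lp ℝ 2 ν))
    (t : FTerm k) : ℝ :=
  ∫ z, (homFun ν T t : Z → ℝ) z ∂ν

/-- A graphon: symmetric measurable `W : X × X → [0,1]`. -/
structure IsGraphon {X : Type*} [MeasurableSpace X] (W : X → X → ℝ) : Prop where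
  measurable : Measurable (Function.uncurry W)
  symm : ∀ x y, W x y = W y x
  nonneg : ∀ x y, 0 ≤ W x y
  le_one : ∀ x y, W x y ≤ 1

/-- A sub-σ-algebra, wrapped in a structure (so that it does not interfere with
instance resolution). -/
structure SubSigma (α : Type*) where
  σ : MeasurableSpace α

/-- `m'` is a `μ`-relatively complete sub-σ-algebra of the ambient σ-algebra `mα`. -/
def RelComplete {X : Type*} [mα : MeasurableSpace X]
    (μ : Measure X) (m' : SubSigma X) : Prop :=
  ∀ Z Z₀ : Set X, MeasurableSet[mα] Z → MeasurableSet[m'.σ] Z₀ →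
    μ (symmDiff Z Z₀) = 0 → MeasurableSet[m'.σ] Z

/-- The conditional expectation `E_m` as an operator on `L²`, i.e. the orthogonal projection
onto the closed subspace `lpMeas` of (a.e.) `m`-measurable `L²` functions. -/
noncomputable def condExpCLM {X : Type*} {m : MeasurableSpace X} [mα : MeasurableSpace X]
    (μ : Measure X) (hm : m ≤ mα) : Lp ℝ 2 μ →L[ℝ] Lp ℝ 2 μ :=
  (lpMeas ℝ ℝ m 2 μ).subtypeL.comp (condExpL2 ℝ ℝ hm)

set_option synthInstance.maxHeartbeats 1000000 in
lemma condExpCLM_fix {X : Type*} {m : MeasurableSpace X} [mα : MeasurableSpace X]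
    (μ : Measure X) (hm : m ≤ mα) (f : Lp ℝ 2 μ) (hf : f ∈ lpMeas ℝ ℝ m 2 μ) :
    condExpCLM μ hm f = f := by
  haveI : Fact (m ≤ mα) := ⟨hm⟩
  show (lpMeas ℝ ℝ m 2 μ).subtypeL (condExpL2 ℝ ℝ hm f) = f
  have : condExpL2 ℝ ℝ hm f = ⟨f, hf⟩ := by
    have := Submodule.orthogonalProjectionOnto_mem_subspace_eq_self
      (K := lpMeas ℝ ℝ m 2 μ) (⟨f, hf⟩ : lpMeas ℝ ℝ m 2 μ)
    simpa [condExpL2] using this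
  rw [this]; rfl

/-- Let `W` be a graphon and let `C` be a `μ^{⊗k}`-relatively complete
sub-σ-algebra of `𝓑^{⊗k}` whose `L²` subspace is invariant under every operator of the
family `𝕋^k_W` (consisting of the neighbor operators `N_j` and the adjacency operators
`A^W_{ij}`).  Then the quotient family `(E_C ∘ T_F ∘ E_C)_{F ∈ 𝓕^k}` has the same
homomorphism densities as `𝕋^k_W`: `t(𝔽, (E_C ∘ T_F ∘ E_C)_F) = t(𝔽, 𝕋^k_W)` for every
term `𝔽` over `𝓕^k`. -/
theorem stmt9 {X : Type*} [MeasurableSpace X] (μ : Measure X) [IsProbabilityMeasure μ]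
    {k : ℕ} (hk : 1 ≤ k) (W : X → X → ℝ) (hW : IsGraphon W)
    (T : FSym k → (Lp ℝ 2 (Measure.pi fun _ : Fin k => μ) →L[ℝ]
      Lp ℝ 2 (Measure.pi fun _ : Fin k => μ)))
    (hN : ∀ (j : Fin k) (f : Lp ℝ 2 (Measure.pi fun _ : Fin k => μ)),
      ⇑(T (FSym.N j) f) =ᵐ[Measure.pi fun _ : Fin k => μ]
        fun x => ∫ y, f (Function.update x j y) ∂μ)
    (hA : ∀ (i j : Fin k) (hij : i ≠ j) (f : Lp ℝ 2 (Measure.pi fun _ : Fin k => μ)),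
      ⇑(T (FSym.A i j hij) f) =ᵐ[Measure.pi fun _ : Fin k => μ]
        fun x => W (x i) (x j) * f x)
    (C : SubSigma (Fin k → X))
    (hm : C.σ ≤ (MeasurableSpace.pi : MeasurableSpace (Fin k → X)))
    (hrc : RelComplete (Measure.pi fun _ : Fin k => μ) C)
    (hinv : ∀ (F : FSym k) (f : Lp ℝ 2 (Measure.pi fun _ : Fin k => μ)),
      f ∈ lpMeas ℝ ℝ C.σ 2 (Measure.pi fun _ : Fin k => μ) →
      T F f ∈ lpMeas ℝ ℝ C.σ 2 (Measure.pi fun _ : Fin k => μ)) :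
    ∀ t : FTerm k,
      homDen (Measure.pi fun _ : Fin k => μ)
        (fun F => condExpCLM (Measure.pi fun _ : Fin k => μ) hm ∘L T F ∘L
          condExpCLM (Measure.pi fun _ : Fin k => μ) hm) t =
      homDen (Measure.pi fun _ : Fin k => μ) T t := by
  intro t
  have hfix : ∀ f : Lp ℝ 2 (Measure.pi fun _ : Fin k => μ),
      f ∈ lpMeas ℝ ℝ C.σ 2 (Measure.pi fun _ : Fin k => μ) →
      condExpCLM (Measure.pi fun _ : Fin k => μ) hm f = f :=
    fun f hf => condExpCLM_fix _ hm f hf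
  have hmulmem : ∀ g₁ g₂ : Lp ℝ 2 (Measure.pi fun _ : Fin k => μ),
      g₁ ∈ lpMeas ℝ ℝ C.σ 2 (Measure.pi fun _ : Fin k => μ) →
      g₂ ∈ lpMeas ℝ ℝ C.σ 2 (Measure.pi fun _ : Fin k => μ) →
      lpMul g₁ g₂ ∈ lpMeas ℝ ℝ C.σ 2 (Measure.pi fun _ : Fin k => μ) := by
    intro g₁ g₂ h₁ h₂
    rw [mem_lpMeas_iff_aestronglyMeasurable] at h₁ h₂ ⊢
    unfold lpMul
    split
    · rename_i hmem
      obtain ⟨f₁, hf₁, he₁⟩ := h₁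
      obtain ⟨f₂, hf₂, he₂⟩ := h₂
      refine ⟨f₁ * f₂, hf₁.mul hf₂, ?_⟩
      refine (MemLp.coeFn_toLp hmem).trans ?_
      filter_upwards [he₁, he₂] with x hx₁ hx₂
      simp [Pi.mul_apply, hx₁, hx₂]
    · exact AEStronglyMeasurable.congr ⟨fun _ => 0, stronglyMeasurable_const, ae_eq_refl _⟩
        (Lp.coeFn_zero ℝ 2 _).symm
  have honemem : lpOne (Measure.pi fun _ : Fin k => μ) ∈
      lpMeas ℝ ℝ C.σ 2 (Measure.pi fun _ : Fin k => μ) := by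
    rw [mem_lpMeas_iff_aestronglyMeasurable]
    exact ⟨fun _ => (1 : ℝ), stronglyMeasurable_const,
      MeasureTheory.Lp.coeFn_const _ _ _⟩
  have key : ∀ t : FTerm k,
      homFun (Measure.pi fun _ : Fin k => μ)
        (fun F => condExpCLM (Measure.pi fun _ : Fin k => μ) hm ∘L T F ∘L
          condExpCLM (Measure.pi fun _ : Fin k => μ) hm) t =
        homFun (Measure.pi fun _ : Fin k => μ) T t ∧
      homFun (Measure.pi fun _ : Fin k => μ) T t ∈
        lpMeas ℝ ℝ C.σ 2 (Measure.pi fun _ : Fin k => μ) := by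
    intro t
    induction t with
    | one => exact ⟨rfl, honemem⟩
    | comp F t ih =>
      obtain ⟨heq, hmemb⟩ := ih
      refine ⟨?_, hinv F _ hmemb⟩
      show condExpCLM _ hm (T F (condExpCLM _ hm (homFun _ _ t))) = T F (homFun _ T t)
      rw [heq, hfix _ hmemb, hfix _ (hinv F _ hmemb)]
    | mul t₁ t₂ ih₁ ih₂ =>
      refine ⟨?_, hmulmem _ _ ih₁.2 ih₂.2⟩
      show lpMul _ _ = lpMul _ _
      rw [ih₁.1, ih₂.1]
  unfold homDen
  rw [(key t).1]
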